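/- arXiv:1505.06762 — 2 statements merged into one kernel-verified Lean document; each statement's English description precedes it below -/
import Mathlib

section
/- Let A ≤ H be normal subgroups of a group G with A finite and A ≤ Z(H). If G/C_G(H) is locally nilpotent and the image of H/A is contained in the hypercenter Z_∞(G/A) of G/A, then H ≤ Z_∞(G)·A. -/
/-!  Transfinite upper central series, hypercenter, and `A`-central series
for a group `G` with `A ≤ Aut G` normalized by the inner automorphisms. -/

universe u v

open Subgroup

section Preamble

variable {G : Type u} [Group G]

/-- The subgroup `Inn(G) ≤ Aut(G)` of inner automorphisms. -/
def Inn (G : Type u) [Group G] : Subgroup (MulAut G) :=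
  (MulAut.conj : G →* MulAut G).range

/-- `A ≤ Aut(G)` is normalized by the inner automorphisms: `A^{Inn(G)} = A`. -/
def NormalizedByInn (A : Subgroup (MulAut G)) : Prop :=
  ∀ g : G, ∀ γ ∈ A, MulAut.conj g * γ * (MulAut.conj g)⁻¹ ∈ A

theorem normalizedByInn_of_le {A : Subgroup (MulAut G)} (h : Inn G ≤ A) :
    NormalizedByInn A := fun g _γ hγ =>
  mul_mem (mul_mem (h ⟨g, rfl⟩) hγ) (inv_mem (h ⟨g, rfl⟩))

theorem normalizedByInn_of_comm {G : Type u} [CommGroup G] (A : Subgroup (MulAut G)) :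
    NormalizedByInn A := by
  intro g γ hγ
  have h1 : (MulAut.conj : G →* MulAut G) g = 1 := by
    ext x
    simp [MulAut.conj_apply, mul_comm]
  rw [h1]
  simpa using hγ

/-- A supremum of normal subgroups is normal. -/
theorem normal_iSup_of_normal {ι : Sort v} (H : ι → Subgroup G) (h : ∀ i, (H i).Normal) :
    (⨆ i, H i).Normal := by
  constructor
  intro n hn g
  refine Subgroup.iSup_induction H (C := fun x => g * x * g⁻¹ ∈ ⨆ i, H i) hn
    (fun i x hx => le_iSup H i ((h i).conj_mem x hx g)) (by simpa using one_mem _) ?_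
  intro x y hx hy
  have key : g * (x * y) * g⁻¹ = g * x * g⁻¹ * (g * y * g⁻¹) := by group
  rw [key]
  exact mul_mem hx hy

/-- One step of the `A`-central series: given a normal subgroup `Z`, this is the preimage in
`G` of the fixed points `C_{G/Z}(A)` of `A` on `G/Z`, i.e. `{g | ∀ γ ∈ A, g⁻¹ • γ(g) ∈ Z}`. -/
def aStep (A : Subgroup (MulAut G)) (Z : Subgroup G) (hZ : Z.Normal) : Subgroup G where
  carrier := { g : G | ∀ γ ∈ A, g⁻¹ * γ g ∈ Z }
  one_mem' := fun γ _ => by simpa using Z.one_mem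
  mul_mem' := by
    intro a b ha hb γ hγ
    have key : (a * b)⁻¹ * γ (a * b) = b⁻¹ * (a⁻¹ * γ a) * b * (b⁻¹ * γ b) := by
      rw [map_mul]; group
    rw [key]
    refine mul_mem ?_ (hb γ hγ)
    simpa using hZ.conj_mem _ (ha γ hγ) b⁻¹
  inv_mem' := by
    intro a ha γ hγ
    have key : a⁻¹⁻¹ * γ a⁻¹ = a * (a⁻¹ * γ a)⁻¹ * a⁻¹ := by
      rw [map_inv]; group
    rw [key]
    exact hZ.conj_mem _ (inv_mem (ha γ hγ)) a

theorem aStep_normal (A : Subgroup (MulAut G)) (hA : NormalizedByInn A)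
    (Z : Subgroup G) (hZ : Z.Normal) : (aStep A Z hZ).Normal := by
  constructor
  intro n hn g γ hγ
  have hγ' : MulAut.conj g⁻¹ * γ * (MulAut.conj g⁻¹)⁻¹ ∈ A := hA g⁻¹ γ hγ
  have h := hn _ hγ'
  have key : (g * n * g⁻¹)⁻¹ * γ (g * n * g⁻¹) =
      g * (n⁻¹ * (MulAut.conj g⁻¹ * γ * (MulAut.conj g⁻¹)⁻¹) n) * g⁻¹ := by
    have h2 : (MulAut.conj g⁻¹ : MulAut G)⁻¹ = MulAut.conj g := by
      rw [← map_inv, inv_inv]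
    rw [h2]
    simp only [MulAut.mul_apply, MulAut.conj_apply]
    simp only [map_mul, map_inv]
    group
  rw [key]
  exact hZ.conj_mem _ h g

/-- The transfinite `A`-central series of `G` relative to a normal subgroup `L`
(i.e. the preimage in `G` of the `A`-central series of `G/L` for the induced action):
`Z_0 = L`, `Z_{α+1}/Z_α = C_{G/Z_α}(A)`, and unions at limit ordinals;
bundled with normality. -/
noncomputable def aCentralSeriesFromAux (A : Subgroup (MulAut G)) (hA : NormalizedByInn A)
    (L : Subgroup G) (hL : L.Normal) (o : Ordinal.{u}) : { Z : Subgroup G // Z.Normal } :=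
  Ordinal.limitRecOn o ⟨L, hL⟩
    (fun _ Z => ⟨aStep A Z.1 Z.2, aStep_normal A hA Z.1 Z.2⟩)
    (fun o _ ih => ⟨⨆ b : { b : Ordinal.{u} // b < o }, (ih b.1 b.2).1,
      normal_iSup_of_normal _ fun b => (ih b.1 b.2).2⟩)

/-- The `α`-th term `Z_α(G, A; L)` of the `A`-central series of `G` starting at `L`. -/
noncomputable def aCentralSeriesFrom (A : Subgroup (MulAut G)) (hA : NormalizedByInn A)
    (L : Subgroup G) (hL : L.Normal) (o : Ordinal.{u}) : Subgroup G :=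
  (aCentralSeriesFromAux A hA L hL o).1

/-- The `α`-th term `Z_α(G, A)` of the `A`-central series of `G`. -/
noncomputable def aCentralSeries (A : Subgroup (MulAut G)) (hA : NormalizedByInn A)
    (o : Ordinal.{u}) : Subgroup G :=
  aCentralSeriesFrom A hA ⊥ (by infer_instance) o

/-- The `A`-hypercenter `Z_∞(G, A)`: the terminal (stationary) term of the `A`-central
series, realized as the supremum of all its terms. -/
noncomputable def aHypercenter (A : Subgroup (MulAut G)) (hA : NormalizedByInn A) : Subgroup G :=
  ⨆ o : Ordinal.{u}, aCentralSeries A hA o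

/-- `G/L` is `A`-hypercentral (for the induced action of `A` on `G/L`), phrased via the
preimages in `G` of the terms of the `A`-central series of `G/L`. -/
noncomputable def aHypercenterFrom (A : Subgroup (MulAut G)) (hA : NormalizedByInn A)
    (L : Subgroup G) (hL : L.Normal) : Subgroup G :=
  ⨆ o : Ordinal.{u}, aCentralSeriesFrom A hA L hL o

/-- The transfinite upper central series of `G`, bundled with normality:
`Z_0 = 1`, `Z_{α+1}/Z_α = Z(G/Z_α)`, and unions at limit ordinals. -/
noncomputable def ucsOrdAux (G : Type u) [Group G] (o : Ordinal.{u}) :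
    { Z : Subgroup G // Z.Normal } :=
  Ordinal.limitRecOn o ⟨⊥, by infer_instance⟩
    (fun _ Z => by exact ⟨@Subgroup.upperCentralSeriesStep G _ Z.1 Z.2, by letI := Z.2; rw [Subgroup.upperCentralSeriesStep_eq_comap_center]; infer_instance⟩)
    (fun o _ ih => ⟨⨆ b : { b : Ordinal.{u} // b < o }, (ih b.1 b.2).1,
      normal_iSup_of_normal _ fun b => (ih b.1 b.2).2⟩)

/-- The `α`-th term `Z_α(G)` of the transfinite upper central series of `G`. -/
noncomputable def ucsOrd (G : Type u) [Group G] (o : Ordinal.{u}) : Subgroup G :=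
  (ucsOrdAux G o).1

/-- The hypercenter `Z_∞(G)`: the terminal (stationary) term of the transfinite upper
central series, realized as the supremum of all its terms. -/
noncomputable def hypercenter (G : Type u) [Group G] : Subgroup G :=
  ⨆ o : Ordinal.{u}, ucsOrd G o

/-- A group is hypercentral if it coincides with its hypercenter. -/
def IsHypercentral (G : Type u) [Group G] : Prop :=
  hypercenter G = ⊤

/-- A group is locally nilpotent if all its finitely generated subgroups are nilpotent. -/
def LocallyNilpotent (G : Type u) [Group G] : Prop :=
  ∀ H : Subgroup G, H.FG → Group.IsNilpotent H

/-- The inner automorphisms form a normal subgroup of `Aut(G)`. -/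
instance Inn.normal : (Inn G).Normal := by
  constructor
  rintro n ⟨x, rfl⟩ γ
  refine ⟨γ x, ?_⟩
  ext y
  simp [MulAut.conj_apply, MulAut.mul_apply, map_mul, map_inv, mul_assoc]

/-- The centralizer of a normal subgroup is normal. -/
instance centralizer_normal (H : Subgroup G) [hH : H.Normal] :
    (Subgroup.centralizer (H : Set G)).Normal := by
  constructor
  intro n hn g
  intro h hh
  have hh' : g⁻¹ * h * g ∈ H := by simpa using hH.conj_mem h hh g⁻¹
  have hc := hn (g⁻¹ * h * g) hh'
  have key1 : h * (g * n * g⁻¹) = g * (g⁻¹ * h * g * n) * g⁻¹ := by group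
  have key2 : g * n * g⁻¹ * h = g * (n * (g⁻¹ * h * g)) * g⁻¹ := by group
  rw [key1, key2, hc]

end Preamble

/-! ### Auxiliary development -/

section AuxUCS

open Subgroup QuotientGroup

variable {G : Type u} [Group G]

theorem ucsOrd_normal (o : Ordinal.{u}) : (ucsOrd G o).Normal :=
  (ucsOrdAux G o).2

theorem ucsOrd_zero : ucsOrd G 0 = ⊥ := by
  unfold ucsOrd ucsOrdAux
  rw [Ordinal.limitRecOn_zero]

theorem ucsOrd_succ (o : Ordinal.{u}) :
    ucsOrd G (Order.succ o) = @Subgroup.upperCentralSeriesStep G _ (ucsOrd G o) (ucsOrd_normal o) := by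
  unfold ucsOrd ucsOrdAux
  rw [Ordinal.limitRecOn_succ]

theorem mem_ucsOrd_succ {o : Ordinal.{u}} {x : G} :
    x ∈ ucsOrd G (Order.succ o) ↔ ∀ y : G, x * y * x⁻¹ * y⁻¹ ∈ ucsOrd G o := by
  rw [ucsOrd_succ]
  exact Iff.rfl

theorem ucsOrd_limit {o : Ordinal.{u}} (ho : Order.IsSuccLimit o) :
    ucsOrd G o = ⨆ b : { b : Ordinal.{u} // b < o }, ucsOrd G b.1 := by
  unfold ucsOrd ucsOrdAux
  rw [Ordinal.limitRecOn_limit _ _ _ _ ho]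

theorem ucsOrd_le_succ (o : Ordinal.{u}) : ucsOrd G o ≤ ucsOrd G (Order.succ o) := by
  intro x hx
  rw [mem_ucsOrd_succ]
  intro y
  have h1 : y * x⁻¹ * y⁻¹ ∈ ucsOrd G o := (ucsOrd_normal o).conj_mem _ (inv_mem hx) y
  have h2 := mul_mem hx h1
  simpa [mul_assoc] using h2

theorem ucsOrd_mono_aux : ∀ b a : Ordinal.{u}, a ≤ b → ucsOrd G a ≤ ucsOrd G b := by
  intro b
  induction b using Ordinal.induction with
  | h j IH =>
    intro a hab
    rcases Ordinal.zero_or_succ_or_isSuccLimit j with rfl | ⟨s, rfl⟩ | hlim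
    · rw [nonpos_iff_eq_zero.mp hab]
    · rcases eq_or_lt_of_le hab with rfl | h
      · exact le_rfl
      · exact (IH s (Order.lt_succ s) a (Order.lt_succ_iff.mp h)).trans (ucsOrd_le_succ s)
    · rcases eq_or_lt_of_le hab with rfl | h
      · exact le_rfl
      · rw [ucsOrd_limit hlim]
        exact le_iSup (fun b : { b : Ordinal.{u} // b < j } => ucsOrd G b.1) ⟨a, h⟩

instance hypercenter_normal : (hypercenter G).Normal :=
  normal_iSup_of_normal _ fun o => ucsOrd_normal o

theorem mem_hypercenter {x : G} : x ∈ hypercenter G ↔ ∃ o : Ordinal.{u}, x ∈ ucsOrd G o := by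
  have hdir : Directed (· ≤ ·) (fun o : Ordinal.{u} => ucsOrd G o) := fun i j =>
    ⟨max i j, ucsOrd_mono_aux _ _ (le_max_left i j), ucsOrd_mono_aux _ _ (le_max_right i j)⟩
  exact Subgroup.mem_iSup_of_directed hdir

theorem exists_ucs_succ_eq : ∃ o : Ordinal.{u}, ucsOrd G (Order.succ o) = ucsOrd G o := by
  by_contra hcon
  push_neg at hcon
  have hsm : StrictMono (ucsOrd G) := by
    intro a b hab
    have h1 : ucsOrd G a < ucsOrd G (Order.succ a) :=
      lt_of_le_of_ne (ucsOrd_le_succ a) (Ne.symm (hcon a))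
    exact h1.trans_le (ucsOrd_mono_aux b (Order.succ a) (Order.succ_le_of_lt hab))
  exact not_injective_of_ordinal (ucsOrd G) hsm.injective

theorem hypercenter_eq_ucsOrd {o₀ : Ordinal.{u}}
    (h : ucsOrd G (Order.succ o₀) = ucsOrd G o₀) : hypercenter G = ucsOrd G o₀ := by
  refine le_antisymm (iSup_le ?_) (le_iSup (fun o : Ordinal.{u} => ucsOrd G o) o₀)
  intro j
  induction j using Ordinal.induction with
  | h j IH =>
    rcases Ordinal.zero_or_succ_or_isSuccLimit j with rfl | ⟨s, rfl⟩ | hlim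
    · rw [ucsOrd_zero]; exact bot_le
    · intro x hx
      rw [mem_ucsOrd_succ] at hx
      rw [← h, mem_ucsOrd_succ]
      intro y
      exact IH s (Order.lt_succ s) (hx y)
    · rw [ucsOrd_limit hlim]
      exact iSup_le fun b => IH b.1 b.2

theorem hypercenter_absorb {x : G} (hx : ∀ y : G, x * y * x⁻¹ * y⁻¹ ∈ hypercenter G) :
    x ∈ hypercenter G := by
  obtain ⟨o₀, h⟩ := exists_ucs_succ_eq (G := G)
  have he := hypercenter_eq_ucsOrd h
  rw [he] at hx ⊢
  rw [← h, mem_ucsOrd_succ]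
  exact hx

theorem center_quot_hypercenter (z : G ⧸ hypercenter G)
    (hz : ∀ g : G ⧸ hypercenter G, g * z = z * g) : z = 1 := by
  obtain ⟨w, rfl⟩ := QuotientGroup.mk_surjective z
  rw [QuotientGroup.eq_one_iff]
  apply hypercenter_absorb
  intro y
  have h1 := hz (QuotientGroup.mk y)
  have h2 : ((w * y * w⁻¹ * y⁻¹ : G) : G ⧸ hypercenter G) = 1 := by
    have : ((w : G ⧸ hypercenter G)) * y * (w : G ⧸ hypercenter G)⁻¹ * (y : G ⧸ hypercenter G)⁻¹ = 1 := by
      rw [← h1]; group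
    simpa using this
  rwa [QuotientGroup.eq_one_iff] at h2

theorem ucsOrd_map_equiv {G' : Type u} [Group G'] (e : G ≃* G') (o : Ordinal.{u}) :
    (ucsOrd G o).map e.toMonoidHom = ucsOrd G' o := by
  induction o using Ordinal.induction with
  | h j IH =>
    rcases Ordinal.zero_or_succ_or_isSuccLimit j with rfl | ⟨s, rfl⟩ | hlim
    · rw [ucsOrd_zero, ucsOrd_zero]; exact Subgroup.map_bot _
    · ext x
      rw [Subgroup.mem_map_equiv, mem_ucsOrd_succ, mem_ucsOrd_succ]
      constructor
      · intro hx y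
        rw [← IH s (Order.lt_succ s), Subgroup.mem_map_equiv]
        simpa [map_mul, map_inv] using hx (e.symm y)
      · intro hx y
        have h1 := hx (e y)
        rw [← IH s (Order.lt_succ s), Subgroup.mem_map_equiv] at h1
        simpa [map_mul, map_inv] using h1
    · rw [ucsOrd_limit hlim, ucsOrd_limit hlim, Subgroup.map_iSup]
      exact iSup_congr fun b => IH b.1 b.2

theorem hypercenter_map_equiv {G' : Type u} [Group G'] (e : G ≃* G') :
    (hypercenter G).map e.toMonoidHom = hypercenter G' := by
  unfold hypercenter
  rw [Subgroup.map_iSup]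
  exact iSup_congr fun o => ucsOrd_map_equiv e o

theorem mem_hypercenter_of_equiv_mem {G' : Type u} [Group G'] (e : G ≃* G') {x : G}
    (hx : e x ∈ hypercenter G') : x ∈ hypercenter G := by
  rw [← hypercenter_map_equiv e, Subgroup.mem_map_equiv] at hx
  simpa using hx

end AuxUCS

section AuxLN

theorem LocallyNilpotent.of_surjective' {G₁ : Type*} {G₂ : Type*} [Group G₁] [Group G₂]
    (f : G₁ →* G₂) (hf : Function.Surjective f) (h : LocallyNilpotent G₁) :
    LocallyNilpotent G₂ := by
  intro S hS
  obtain ⟨T, hT⟩ := hS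
  classical
  let U : Finset G₁ := T.image fun t => Function.surjInv hf t
  have him : f '' (U : Set G₁) = (T : Set G₂) := by
    ext y
    constructor
    · rintro ⟨u, hu, rfl⟩
      simp only [U, Finset.coe_image, Set.mem_image, Finset.mem_coe] at hu
      obtain ⟨t, ht, rfl⟩ := hu
      rwa [Function.surjInv_eq hf t]
    · intro hy
      exact ⟨Function.surjInv hf y, by
        simp only [U, Finset.coe_image, Set.mem_image, Finset.mem_coe]
        exact ⟨y, hy, rfl⟩, Function.surjInv_eq hf y⟩
  have hS'fg : (Subgroup.closure (U : Set G₁)).FG := ⟨U, rfl⟩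
  have hmap : (Subgroup.closure (U : Set G₁)).map f = S := by
    rw [MonoidHom.map_closure, him, hT]
  have hnil := h _ hS'fg
  have hsurj2 := MonoidHom.subgroupMap_surjective f (Subgroup.closure (U : Set G₁))
  have hnil2 : Group.IsNilpotent ↥((Subgroup.closure (U : Set G₁)).map f) :=
    nilpotent_of_surjective _ hsurj2
  exact hmap ▸ hnil2

theorem LocallyNilpotent.isNilpotent_of_finite {G₁ : Type*} [Group G₁] [Finite G₁]
    (h : LocallyNilpotent G₁) : Group.IsNilpotent G₁ := by
  have h1 : (⊤ : Subgroup G₁).FG := Group.fg_def.mp inferInstance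
  haveI := h ⊤ h1
  exact nilpotent_of_surjective (Subgroup.topEquiv (G := G₁)).toMonoidHom
    (Subgroup.topEquiv (G := G₁)).surjective

end AuxLN


section CoreLemma

open Subgroup QuotientGroup

universe w

set_option maxHeartbeats 1000000 in
/-- The key one-step lemma. -/
theorem core_lemma {G' : Type w} [Group G'] (A' : Subgroup G') [A'.Normal] [Finite ↥A']
    (habel : ∀ a ∈ A', ∀ b ∈ A', a * b = b * a)
    (hmin : ∀ B : Subgroup G', B.Normal → B ≤ A' → B = ⊥ ∨ B = A')
    (hcent : ∀ z : G', (∀ g : G', g * z = z * g) → z = 1)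
    (x : G') (hxA : ∀ a ∈ A', x * a = a * x)
    (hx : ∀ g : G', x⁻¹ * (g * x * g⁻¹) ∈ A')
    (hLN : ∀ (G'' : Type w) [Group G''] (f : G' →* G''), Function.Surjective f →
      Subgroup.centralizer {x} ⊓ Subgroup.centralizer (A' : Set G') ≤ f.ker →
      LocallyNilpotent G'') :
    x ∈ A' := by
  classical
  by_cases hA0 : A' = ⊥
  · have h1 : ∀ g : G', g * x = x * g := by
      intro g
      have h2 := hx g
      rw [hA0, Subgroup.mem_bot] at h2
      have h3 : x = g * x * g⁻¹ := inv_mul_eq_one.mp h2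
      calc g * x = (g * x * g⁻¹) * g := by group
        _ = x * g := by rw [← h3]
    have hx1 : x = 1 := hcent x h1
    rw [hx1]; exact one_mem _
  have hA'nontriv : Nontrivial ↥A' := (Subgroup.nontrivial_iff_ne_bot A').mpr hA0
  set K : Subgroup G' := Subgroup.centralizer {x} ⊓ Subgroup.centralizer (A' : Set G') with hKdef
  have hmemK : ∀ k, k ∈ K ↔ (x * k = k * x ∧ ∀ a ∈ A', a * k = k * a) := by
    intro k
    rw [hKdef, Subgroup.mem_inf, Subgroup.mem_centralizer_iff, Subgroup.mem_centralizer_iff]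
    simp only [Set.mem_singleton_iff, forall_eq, SetLike.mem_coe]
  -- the conjugate cocycle values
  have hconj : ∀ g : G', g * x * g⁻¹ = x * (x⁻¹ * (g * x * g⁻¹)) := fun g =>
    (mul_inv_cancel_left x _).symm
  haveI hKnormal : K.Normal := by
    constructor
    intro k hk g
    rw [hmemK] at hk ⊢
    obtain ⟨hk1, hk2⟩ := hk
    constructor
    · -- x commutes with g k g⁻¹
      have hc' : x⁻¹ * (g⁻¹ * x * g) ∈ A' := by
        have := hx g⁻¹
        rwa [inv_inv] at this
      have hkc' : (x⁻¹ * (g⁻¹ * x * g)) * k = k * (x⁻¹ * (g⁻¹ * x * g)) := hk2 _ hc'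
      have e1 : g⁻¹ * x * g = x * (x⁻¹ * (g⁻¹ * x * g)) := (mul_inv_cancel_left x _).symm
      calc x * (g * k * g⁻¹) = g * ((g⁻¹ * x * g) * k) * g⁻¹ := by group
        _ = g * ((x * (x⁻¹ * (g⁻¹ * x * g))) * k) * g⁻¹ := by rw [← e1]
        _ = g * (x * ((x⁻¹ * (g⁻¹ * x * g)) * k)) * g⁻¹ := by group
        _ = g * (x * (k * (x⁻¹ * (g⁻¹ * x * g)))) * g⁻¹ := by rw [hkc']
        _ = g * ((x * k) * (x⁻¹ * (g⁻¹ * x * g))) * g⁻¹ := by group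
        _ = g * ((k * x) * (x⁻¹ * (g⁻¹ * x * g))) * g⁻¹ := by rw [hk1]
        _ = g * (k * (x * (x⁻¹ * (g⁻¹ * x * g)))) * g⁻¹ := by group
        _ = g * (k * (g⁻¹ * x * g)) * g⁻¹ := by rw [← e1]
        _ = (g * k * g⁻¹) * x := by group
    · intro a ha
      have h3 : g⁻¹ * a * g ∈ A' := by
        have := ‹A'.Normal›.conj_mem a ha g⁻¹
        simpa [mul_assoc] using this
      have h4 := hk2 _ h3
      calc a * (g * k * g⁻¹) = g * ((g⁻¹ * a * g) * k) * g⁻¹ := by group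
        _ = g * (k * (g⁻¹ * a * g)) * g⁻¹ := by rw [h4]
        _ = (g * k * g⁻¹) * a := by group
  -- the cocycle
  set c : G' → ↥A' := fun g => ⟨x⁻¹ * (g * x * g⁻¹), hx g⟩ with hcdef
  have hcK : ∀ g k, k ∈ K → c (g * k) = c g := by
    intro g k hk
    rw [hmemK] at hk
    apply Subtype.ext
    show x⁻¹ * (g * k * x * (g * k)⁻¹) = x⁻¹ * (g * x * g⁻¹)
    have h1 : k * x * k⁻¹ = x := by rw [← hk.1]; group
    calc x⁻¹ * (g * k * x * (g * k)⁻¹) = x⁻¹ * (g * (k * x * k⁻¹) * g⁻¹) := by group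
      _ = x⁻¹ * (g * x * g⁻¹) := by rw [h1]
  -- finiteness of G' ⧸ K
  have hFin : Finite (G' ⧸ K) := by
    let fdata : G' → ↥A' × (↥A' → ↥A') := fun g =>
      (c g, fun a => ⟨g * (a : G') * g⁻¹, ‹A'.Normal›.conj_mem _ a.2 g⟩)
    have hfdata : ∀ g k, k ∈ K → fdata (g * k) = fdata g := by
      intro g k hk
      have hk' := (hmemK k).mp hk
      refine Prod.ext (hcK g k hk) ?_
      funext a
      apply Subtype.ext
      show (g * k) * (a : G') * (g * k)⁻¹ = g * (a : G') * g⁻¹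
      have h1 : k * (a : G') * k⁻¹ = (a : G') := by rw [← hk'.2 (a : G') a.2]; group
      calc (g * k) * (a : G') * (g * k)⁻¹ = g * (k * (a : G') * k⁻¹) * g⁻¹ := by group
        _ = g * (a : G') * g⁻¹ := by rw [h1]
    refine Finite.of_injective (fun σ : G' ⧸ K => Quotient.liftOn' σ fdata ?_) ?_
    · intro g h hrel
      have hgh : g⁻¹ * h ∈ K := QuotientGroup.leftRel_apply.mp hrel
      have h1 : h = g * (g⁻¹ * h) := by group
      rw [h1]
      exact (hfdata g _ hgh).symm
    · intro σ τ
      refine Quotient.inductionOn₂' σ τ ?_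
      intro g h hfd
      simp only [Quotient.liftOn'_mk''] at hfd
      have h1 : c g = c h := congrArg Prod.fst hfd
      have h2 : ∀ a : ↥A', g * (a : G') * g⁻¹ = h * (a : G') * h⁻¹ := by
        intro a
        exact congrArg Subtype.val (congrFun (congrArg Prod.snd hfd) a)
      apply Quotient.sound'
      rw [QuotientGroup.leftRel_apply, hmemK]
      constructor
      · have e1 : g * x * g⁻¹ = h * x * h⁻¹ :=
          mul_left_cancel (a := x⁻¹) (congrArg Subtype.val h1)
        calc x * (g⁻¹ * h) = g⁻¹ * (g * x * g⁻¹) * h := by group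
          _ = g⁻¹ * (h * x * h⁻¹) * h := by rw [e1]
          _ = (g⁻¹ * h) * x := by group
      · intro a ha
        have e2 : g * a * g⁻¹ = h * a * h⁻¹ := h2 ⟨a, ha⟩
        calc a * (g⁻¹ * h) = g⁻¹ * (g * a * g⁻¹) * h := by group
          _ = g⁻¹ * (h * a * h⁻¹) * h := by rw [e2]
          _ = (g⁻¹ * h) * a := by group
  haveI := hFin
  have hLNq : LocallyNilpotent (G' ⧸ K) := by
    refine hLN (G' ⧸ K) (QuotientGroup.mk' K) (QuotientGroup.mk'_surjective K) ?_
    rw [QuotientGroup.ker_mk']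
  haveI hnilQ : Group.IsNilpotent (G' ⧸ K) := hLNq.isNilpotent_of_finite
  -- the prime q
  have hcardA : 1 < Nat.card ↥A' := Finite.one_lt_card_iff_nontrivial.mpr hA'nontriv
  set q := (Nat.card ↥A').minFac with hqdef
  have hqprime : q.Prime := Nat.minFac_prime (by omega)
  haveI : Fact q.Prime := ⟨hqprime⟩
  -- every element of A' has order dividing q
  have hqA : ∀ a ∈ A', a ^ q = 1 := by
    let B : Subgroup G' :=
      { carrier := { a : G' | a ∈ A' ∧ a ^ q = 1 }
        one_mem' := ⟨one_mem _, one_pow q⟩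
        mul_mem' := by
          rintro a b ⟨haA, haq⟩ ⟨hbA, hbq⟩
          refine ⟨mul_mem haA hbA, ?_⟩
          have hcomm : Commute a b := habel a haA b hbA
          rw [hcomm.mul_pow, haq, hbq, one_mul]
        inv_mem' := by
          rintro a ⟨haA, haq⟩
          exact ⟨inv_mem haA, by rw [inv_pow, haq, inv_one]⟩ }
    have hBnormal : B.Normal := by
      constructor
      rintro a ⟨haA, haq⟩ g
      refine ⟨‹A'.Normal›.conj_mem a haA g, ?_⟩
      have h1 : (g * a * g⁻¹) ^ q = g * a ^ q * g⁻¹ := by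
        have := (map_pow (MulAut.conj g) a q).symm
        simpa [MulAut.conj_apply] using this
      rw [h1, haq]
      simp
    have hBbot : B ≠ ⊥ := by
      have hdvd : q ∣ Nat.card ↥A' := Nat.minFac_dvd _
      haveI : Fintype ↥A' := Fintype.ofFinite _
      obtain ⟨a, ha⟩ := exists_prime_orderOf_dvd_card (G := ↥A') q
        (by rwa [← Nat.card_eq_fintype_card])
      intro hB
      have h1 : (a : G') ∈ B := by
        refine ⟨a.2, ?_⟩
        have h2 : a ^ q = 1 := by rw [← ha]; exact pow_orderOf_eq_one a
        have h3 := congrArg (Subtype.val : ↥A' → G') h2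
        simpa using h3
      rw [hB, Subgroup.mem_bot] at h1
      have h4 : a = 1 := Subtype.ext h1
      rw [h4, orderOf_one] at ha
      exact hqprime.one_lt.ne' ha.symm
    rcases hmin B hBnormal (fun b hb => hb.1) with h | h
    · exact absurd h hBbot
    · intro a ha
      rw [← h] at ha
      exact ha.2
  have hpgA : IsPGroup q ↥A' := by
    intro a
    refine ⟨1, ?_⟩
    rw [pow_one]
    apply Subtype.ext
    simpa using hqA (a : G') a.2
  obtain ⟨kA, hkA⟩ := IsPGroup.iff_card.mp hpgA
  have hkA0 : kA ≠ 0 := by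
    intro h
    rw [h, pow_zero] at hkA
    omega
  -- normal q-complement in G' ⧸ K
  obtain ⟨Qs, hQsNormal, hQsCard, hQsP⟩ :
      ∃ Qs : Subgroup (G' ⧸ K), Qs.Normal ∧ ¬ q ∣ Nat.card ↥Qs ∧
        (∀ σ : G' ⧸ K, ∃ j : ℕ, σ ^ q ^ j ∈ Qs) := by
    by_cases hdvd : q ∣ Nat.card (G' ⧸ K)
    · have hcard0 : Nat.card (G' ⧸ K) ≠ 0 := Nat.card_pos.ne'
      have h4 : Nonempty
          ((∀ p : (Nat.card (G' ⧸ K)).primeFactors, ∀ P : Sylow p (G' ⧸ K),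
            (↑P : Subgroup (G' ⧸ K))) ≃* (G' ⧸ K)) :=
        ((isNilpotent_of_finite_tfae (G := G' ⧸ K)).out 0 4).mp hnilQ
      obtain ⟨e⟩ := h4
      have hqmem : q ∈ (Nat.card (G' ⧸ K)).primeFactors :=
        Nat.mem_primeFactors.mpr ⟨hqprime, hdvd, hcard0⟩
      let P : Sylow q (G' ⧸ K) := default
      let idx : (Nat.card (G' ⧸ K)).primeFactors := ⟨q, hqmem⟩
      let π : (G' ⧸ K) →* ↥(P : Subgroup (G' ⧸ K)) :=
        ((Pi.evalMonoidHom _ P).comp (Pi.evalMonoidHom _ idx)).comp e.symm.toMonoidHom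
      have hπs : Function.Surjective π := by
        intro y
        refine ⟨e (Pi.mulSingle idx (Pi.mulSingle P y)), ?_⟩
        show ((Pi.evalMonoidHom _ P).comp (Pi.evalMonoidHom _ idx))
          (e.symm (e (Pi.mulSingle idx (Pi.mulSingle P y)))) = y
        rw [e.symm_apply_apply]
        simp [Pi.evalMonoidHom]
      refine ⟨π.ker, inferInstance, ?_, ?_⟩
      · have hiso := QuotientGroup.quotientKerEquivOfSurjective π hπs
        have hcard1 : Nat.card ((G' ⧸ K) ⧸ π.ker) =
            q ^ ((Nat.card (G' ⧸ K)).factorization q) := by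
          rw [Nat.card_congr hiso.toEquiv]
          exact Sylow.card_eq_multiplicity P
        have hmul : Nat.card ↥π.ker * Nat.card ((G' ⧸ K) ⧸ π.ker) = Nat.card (G' ⧸ K) := by
          rw [← Subgroup.index_eq_card]
          exact Subgroup.card_mul_index _
        intro hcon
        set ν := (Nat.card (G' ⧸ K)).factorization q with hν
        have hdd : q ^ (ν + 1) ∣ Nat.card (G' ⧸ K) := by
          rw [pow_succ, ← hmul, hcard1, Nat.mul_comm (Nat.card ↥π.ker)]
          exact Nat.mul_dvd_mul dvd_rfl hcon
        exact Nat.pow_succ_factorization_not_dvd hcard0 hqprime hdd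
      · intro σ
        obtain ⟨j, hj⟩ := P.isPGroup' (π σ)
        refine ⟨j, ?_⟩
        rw [MonoidHom.mem_ker, map_pow, hj]
    · refine ⟨⊤, inferInstance, ?_, fun σ => ⟨0, Subgroup.mem_top _⟩⟩
      rwa [Nat.card_congr Subgroup.topEquiv.toEquiv]
  -- the preimage of the complement
  set Qh : Subgroup G' := Subgroup.comap (QuotientGroup.mk' K) Qs with hQhdef
  haveI hQhN : Qh.Normal := hQsNormal.comap _
  have hKQh : K ≤ Qh := by
    intro k hk
    show QuotientGroup.mk' K k ∈ Qs
    rw [show QuotientGroup.mk' K k = 1 from (QuotientGroup.eq_one_iff k).mpr hk]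
    exact one_mem _
  -- commutative group structure on A'
  letI : CommGroup ↥A' :=
    { (inferInstance : Group ↥A') with
      mul_comm := fun a b => Subtype.ext (by
        push_cast
        exact habel (a : G') a.2 (b : G') b.2) }
  haveI : Fintype ↥Qs := Fintype.ofFinite _
  set t : ↥Qs → G' := fun σ => Quotient.out (σ : G' ⧸ K) with htdef
  have ht : ∀ σ : ↥Qs, QuotientGroup.mk (t σ) = ((σ : G' ⧸ K)) := by
    intro σ
    exact QuotientGroup.out_eq' _
  set s : ↥A' := ∏ σ : ↥Qs, c (t σ) with hsdef
  set ψ : G' →* MulAut ↥A' := MulAut.conjNormal with hψdef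
  have hψ : ∀ (g : G') (a : ↥A'), ((ψ g a : ↥A') : G') = g * (a : G') * g⁻¹ := by
    intro g a
    exact MulAut.conjNormal_apply g a
  have hcoc : ∀ g h : G', c (g * h) = c g * ψ g (c h) := by
    intro g h
    apply Subtype.ext
    push_cast
    rw [hψ]
    show x⁻¹ * (g * h * x * (g * h)⁻¹) =
      (x⁻¹ * (g * x * g⁻¹)) * (g * (x⁻¹ * (h * x * h⁻¹)) * g⁻¹)
    group
  -- the averaging identity
  have hmQ : ∀ r ∈ Qh, c r ^ Fintype.card ↥Qs * ψ r s = s := by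
    intro r hr
    have hrQs : QuotientGroup.mk' K r ∈ Qs := hr
    set rb : ↥Qs := ⟨QuotientGroup.mk' K r, hrQs⟩ with hrbdef
    have key1 : ∀ σ : ↥Qs, c (t (rb * σ)) = c (r * t σ) := by
      intro σ
      have e1 : (QuotientGroup.mk (t (rb * σ)) : G' ⧸ K) = QuotientGroup.mk (r * t σ) := by
        rw [ht]
        push_cast
        rw [← ht σ]
        rfl
      have e2 : (r * t σ)⁻¹ * t (rb * σ) ∈ K := by
        rw [← QuotientGroup.eq]
        exact e1.symm
      have e3 : t (rb * σ) = (r * t σ) * ((r * t σ)⁻¹ * t (rb * σ)) := by group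
      rw [e3, hcK _ _ e2]
    have key2 : s = ∏ σ : ↥Qs, c (t (rb * σ)) := by
      rw [hsdef]
      exact (Fintype.prod_equiv (Equiv.mulLeft rb) _ _ (fun σ => rfl)).symm
    calc c r ^ Fintype.card ↥Qs * ψ r s
        = (∏ _σ : ↥Qs, c r) * ∏ σ : ↥Qs, ψ r (c (t σ)) := by
          rw [Finset.prod_const, Finset.card_univ, hsdef, map_prod]
      _ = ∏ σ : ↥Qs, (c r * ψ r (c (t σ))) := (Finset.prod_mul_distrib).symm
      _ = ∏ σ : ↥Qs, c (r * t σ) := by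
          refine Finset.prod_congr rfl fun σ _ => ?_
          rw [← hcoc]
      _ = ∏ σ : ↥Qs, c (t (rb * σ)) := by
          refine Finset.prod_congr rfl fun σ _ => ?_
          rw [key1]
      _ = s := key2.symm
  set m := Fintype.card ↥Qs with hmdef
  have hqm : ¬ q ∣ m := by
    rw [hmdef, ← Nat.card_eq_fintype_card]
    exact hQsCard
  have hpowinj : Function.Injective (fun a : ↥A' => a ^ m) := by
    intro a b hab
    simp only at hab
    have h1 : (a * b⁻¹) ^ m = 1 := by
      rw [mul_pow, inv_pow, hab, mul_inv_cancel]
    have h2 : orderOf (a * b⁻¹) ∣ m := orderOf_dvd_of_pow_eq_one h1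
    have h3 : orderOf (a * b⁻¹) ∣ q ^ kA := hkA ▸ orderOf_dvd_natCard _
    have hco : Nat.Coprime (q ^ kA) m :=
      Nat.Coprime.pow_left kA ((Nat.Prime.coprime_iff_not_dvd hqprime).mpr hqm)
    have h4 : orderOf (a * b⁻¹) ∣ 1 := by
      have h5 := Nat.dvd_gcd h3 h2
      rwa [Nat.Coprime.gcd_eq_one hco] at h5
    have h6 : a * b⁻¹ = 1 := orderOf_eq_one_iff.mp (Nat.dvd_one.mp h4)
    exact mul_inv_eq_one.mp h6
  obtain ⟨b, hb⟩ := Finite.injective_iff_surjective.mp hpowinj s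
  simp only at hb
  have hcr : ∀ r ∈ Qh, c r = b * (ψ r b)⁻¹ := by
    intro r hr
    apply hpowinj
    simp only
    have e1 : c r ^ m = s * (ψ r s)⁻¹ := eq_mul_inv_of_mul_eq (hmQ r hr)
    show c r ^ m = (b * (ψ r b)⁻¹) ^ m
    rw [e1, mul_pow, inv_pow, ← map_pow, hb]
  set y : G' := x * (b : G') with hydef
  have hyQ : ∀ r ∈ Qh, r * y * r⁻¹ = y := by
    intro r hr
    have h1 : r * x * r⁻¹ = x * ((c r : ↥A') : G') := hconj r
    have h2 : r * (b : G') * r⁻¹ = ((ψ r b : ↥A') : G') := (hψ r b).symm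
    have h3 : ((c r : ↥A') : G') * ((ψ r b : ↥A') : G') = (b : G') := by
      rw [hcr r hr]
      push_cast
      group
    calc r * (x * (b : G')) * r⁻¹ = (r * x * r⁻¹) * (r * (b : G') * r⁻¹) := by group
      _ = (x * ((c r : ↥A') : G')) * ((ψ r b : ↥A') : G') := by rw [h1, h2]
      _ = x * (((c r : ↥A') : G') * ((ψ r b : ↥A') : G')) := by rw [mul_assoc]
      _ = x * (b : G') := by rw [h3]
  -- the subgroup D of Qh-fixed points of A'
  let D : Subgroup G' :=
    { carrier := { d : G' | d ∈ A' ∧ ∀ r ∈ Qh, r * d * r⁻¹ = d }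
      one_mem' := ⟨one_mem _, fun r _ => by group⟩
      mul_mem' := by
        rintro d₁ d₂ ⟨h1A, h1f⟩ ⟨h2A, h2f⟩
        refine ⟨mul_mem h1A h2A, fun r hr => ?_⟩
        calc r * (d₁ * d₂) * r⁻¹ = (r * d₁ * r⁻¹) * (r * d₂ * r⁻¹) := by group
          _ = d₁ * d₂ := by rw [h1f r hr, h2f r hr]
      inv_mem' := by
        rintro d ⟨hdA, hdf⟩
        refine ⟨inv_mem hdA, fun r hr => ?_⟩
        rw [show r * d⁻¹ * r⁻¹ = (r * d * r⁻¹)⁻¹ by group, hdf r hr] }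
  have hDnormal : D.Normal := by
    constructor
    rintro d ⟨hdA, hdf⟩ g
    refine ⟨‹A'.Normal›.conj_mem d hdA g, ?_⟩
    intro r hr
    have hr' : g⁻¹ * r * g ∈ Qh := by
      have := hQhN.conj_mem r hr g⁻¹
      simpa [mul_assoc] using this
    calc r * (g * d * g⁻¹) * r⁻¹
        = g * ((g⁻¹ * r * g) * d * (g⁻¹ * r * g)⁻¹) * g⁻¹ := by group
      _ = g * d * g⁻¹ := by rw [hdf _ hr']
  have hcyA : ∀ g : G', y⁻¹ * (g * y * g⁻¹) ∈ A' := by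
    intro g
    have h1 : y⁻¹ * (g * y * g⁻¹) =
        (b : G')⁻¹ * ((c g : ↥A') : G') * ((ψ g b : ↥A') : G') := by
      rw [hydef, hcdef]
      simp only
      rw [hψ]
      group
    rw [h1]
    exact mul_mem (mul_mem (inv_mem b.2) (c g).2) (ψ g b).2
  have hcyf : ∀ g : G', ∀ r ∈ Qh, r * (y⁻¹ * (g * y * g⁻¹)) * r⁻¹ = y⁻¹ * (g * y * g⁻¹) := by
    intro g r hr
    have hr' : g⁻¹ * r * g ∈ Qh := by
      have := hQhN.conj_mem r hr g⁻¹
      simpa [mul_assoc] using this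
    have h1 : r * y⁻¹ * r⁻¹ = y⁻¹ := by
      rw [show r * y⁻¹ * r⁻¹ = (r * y * r⁻¹)⁻¹ by group, hyQ r hr]
    have h2 : (g⁻¹ * r * g) * y * (g⁻¹ * r * g)⁻¹ = y := hyQ _ hr'
    calc r * (y⁻¹ * (g * y * g⁻¹)) * r⁻¹
        = (r * y⁻¹ * r⁻¹) * (g * ((g⁻¹ * r * g) * y * (g⁻¹ * r * g)⁻¹) * g⁻¹) := by group
      _ = y⁻¹ * (g * y * g⁻¹) := by rw [h1, h2]
  rcases hmin D hDnormal (fun d hd => hd.1) with hD | hD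
  · -- D = ⊥: y is central, so x ∈ A'
    have hyc : ∀ g : G', g * y = y * g := by
      intro g
      have h1 : y⁻¹ * (g * y * g⁻¹) ∈ D := ⟨hcyA g, fun r hr => hcyf g r hr⟩
      rw [hD, Subgroup.mem_bot] at h1
      have h2 : y = g * y * g⁻¹ := inv_mul_eq_one.mp h1
      calc g * y = (g * y * g⁻¹) * g := by group
        _ = y * g := by rw [← h2]
    have hy1 : y = 1 := hcent y hyc
    have hx2 : x = (b : G')⁻¹ := by
      rw [hydef] at hy1
      exact eq_inv_of_mul_eq_one_left hy1
    rw [hx2]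
    exact inv_mem b.2
  · -- D = A': contradiction via the p-group fixed point argument
    exfalso
    have hker : ∀ r ∈ Qh, ψ r = 1 := by
      intro r hr
      apply MulEquiv.ext
      intro a
      have haD : (a : G') ∈ D := by rw [hD]; exact a.2
      apply Subtype.ext
      show ((ψ r a : ↥A') : G') = ((a : ↥A') : G')
      rw [hψ]
      exact haD.2 r hr
    set ρ : (G' ⧸ Qh) →* MulAut ↥A' := QuotientGroup.lift Qh ψ (fun r hr => hker r hr)
      with hρdef
    letI : MulAction (G' ⧸ Qh) ↥A' := MulAction.compHom _ ρ
    have hsmul : ∀ (g : G') (a : ↥A'), (QuotientGroup.mk g : G' ⧸ Qh) • a = ψ g a := by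
      intro g a
      show ρ (QuotientGroup.mk g) a = ψ g a
      rw [hρdef]
      rfl
    have hP : IsPGroup q (G' ⧸ Qh) := by
      intro σ
      obtain ⟨g, rfl⟩ := QuotientGroup.mk_surjective σ
      obtain ⟨j, hj⟩ := hQsP (QuotientGroup.mk' K g)
      refine ⟨j, ?_⟩
      have hmem : g ^ q ^ j ∈ Qh := by
        show QuotientGroup.mk' K (g ^ q ^ j) ∈ Qs
        rw [map_pow]
        exact hj
      rw [← QuotientGroup.mk_pow]
      exact (QuotientGroup.eq_one_iff _).mpr hmem
    have hmod := hP.card_modEq_card_fixedPoints ↥A'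
    have hdvdA : q ∣ Nat.card ↥A' := by
      rw [hkA]
      exact dvd_pow_self q hkA0
    have hdvdfix : q ∣ Nat.card (MulAction.fixedPoints (G' ⧸ Qh) ↥A') :=
      (Nat.modEq_zero_iff_dvd).mp ((hmod.symm).trans ((Nat.modEq_zero_iff_dvd).mpr hdvdA))
    have hone : (1 : ↥A') ∈ MulAction.fixedPoints (G' ⧸ Qh) ↥A' := by
      intro σ
      obtain ⟨g, rfl⟩ := QuotientGroup.mk_surjective σ
      rw [hsmul, map_one]
    have hpos : 0 < Nat.card (MulAction.fixedPoints (G' ⧸ Qh) ↥A') := by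
      haveI : Nonempty (MulAction.fixedPoints (G' ⧸ Qh) ↥A') := ⟨⟨1, hone⟩⟩
      exact Nat.card_pos
    have hlt : 1 < Nat.card (MulAction.fixedPoints (G' ⧸ Qh) ↥A') :=
      lt_of_lt_of_le hqprime.one_lt (Nat.le_of_dvd hpos hdvdfix)
    haveI hnontriv : Nontrivial (MulAction.fixedPoints (G' ⧸ Qh) ↥A') :=
      Finite.one_lt_card_iff_nontrivial.mp hlt
    obtain ⟨a, ha⟩ := exists_ne (⟨1, hone⟩ : MulAction.fixedPoints (G' ⧸ Qh) ↥A')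
    have hfix : ∀ g : G', g * ((a : ↥A') : G') * g⁻¹ = ((a : ↥A') : G') := by
      intro g
      have h1 : (QuotientGroup.mk g : G' ⧸ Qh) • (a : ↥A') = (a : ↥A') := a.2 _
      rw [hsmul] at h1
      have h2 := congrArg (Subtype.val : ↥A' → G') h1
      rwa [hψ] at h2
    have hcen : ∀ g : G', g * ((a : ↥A') : G') = ((a : ↥A') : G') * g := by
      intro g
      calc g * ((a : ↥A') : G') = (g * ((a : ↥A') : G') * g⁻¹) * g := by group
        _ = ((a : ↥A') : G') * g := by rw [hfix g]
    have h1 : ((a : ↥A') : G') = 1 := hcent _ hcen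
    exact ha (Subtype.ext (Subtype.ext h1))

end CoreLemma


section MainProof

open Subgroup QuotientGroup Pointwise

theorem finite_map_of_finite {G₁ G₂ : Type*} [Group G₁] [Group G₂] (f : G₁ →* G₂)
    (A : Subgroup G₁) [Finite ↥A] : Finite ↥(A.map f) := by
  refine Finite.of_surjective (fun a : ↥A => (⟨f a, Subgroup.mem_map_of_mem f a.2⟩ : ↥(A.map f))) ?_
  rintro ⟨z, hz⟩
  obtain ⟨a, ha, rfl⟩ := Subgroup.mem_map.mp hz
  exact ⟨⟨a, ha⟩, rfl⟩

theorem main_aux : ∀ (n : ℕ) (G : Type u) [Group G] (A H : Subgroup G),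
    ∀ [A.Normal] [H.Normal] [Finite ↥A],
    Nat.card ↥A < n → A ≤ H → A ≤ Subgroup.centralizer (H : Set G) →
    LocallyNilpotent (G ⧸ Subgroup.centralizer (H : Set G)) →
    H.map (QuotientGroup.mk' A) ≤ hypercenter (G ⧸ A) →
    ∀ h ∈ H, h ∈ hypercenter G ⊔ A := by
  intro n
  induction n with
  | zero =>
    intro G _ A H _ _ _ hcard
    exact absurd hcard (Nat.not_lt_zero _)
  | succ n IH =>
    intro G _ A H _ _ _ hcard hAH hAZ hln hhyp
    by_cases hminA : ∀ B : Subgroup G, B.Normal → B ≤ A → B = ⊥ ∨ B = A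
    · -- A is minimal (or trivial)
      have hkey : ∀ x₀ : G, x₀ ∈ H → (∀ g : G, x₀ * g * x₀⁻¹ * g⁻¹ ∈ hypercenter G ⊔ A) →
          x₀ ∈ hypercenter G ⊔ A := by
        intro x₀ hx₀H hcomm
        have hu : ∀ g : G, x₀⁻¹ * (g * x₀ * g⁻¹) ∈ hypercenter G ⊔ A := by
          intro g
          have h1 : (x₀ * g * x₀⁻¹ * g⁻¹)⁻¹ ∈ hypercenter G ⊔ A := inv_mem (hcomm g)
          have h2 : x₀⁻¹ * (x₀ * g * x₀⁻¹ * g⁻¹)⁻¹ * (x₀⁻¹)⁻¹ ∈ hypercenter G ⊔ A :=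
            Subgroup.Normal.conj_mem inferInstance _ h1 x₀⁻¹
          have h3 : x₀⁻¹ * (g * x₀ * g⁻¹) = x₀⁻¹ * (x₀ * g * x₀⁻¹ * g⁻¹)⁻¹ * (x₀⁻¹)⁻¹ := by
            group
          rw [h3]
          exact h2
        set A' : Subgroup (G ⧸ hypercenter G) := A.map (QuotientGroup.mk' (hypercenter G))
          with hA'def
        haveI : A'.Normal :=
          Subgroup.Normal.map ‹A.Normal› _ (QuotientGroup.mk'_surjective _)
        haveI : Finite ↥A' := finite_map_of_finite _ A
        have habel' : ∀ a ∈ A', ∀ b ∈ A', a * b = b * a := by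
          intro a2 ha2 b2 hb2
          obtain ⟨a, haA, rfl⟩ := Subgroup.mem_map.mp ha2
          obtain ⟨b, hbA, rfl⟩ := Subgroup.mem_map.mp hb2
          rw [← map_mul, ← map_mul]
          congr 1
          exact (Subgroup.mem_centralizer_iff.mp (hAZ haA) b (hAH hbA)).symm
        have hmin' : ∀ B : Subgroup (G ⧸ hypercenter G), B.Normal → B ≤ A' → B = ⊥ ∨ B = A' := by
          intro B hBn hBA'
          by_cases hB0 : B = ⊥
          · exact Or.inl hB0
          right
          have hex : ∃ b2 ∈ B, b2 ≠ 1 := by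
            by_contra hcon
            push_neg at hcon
            exact hB0 ((Subgroup.eq_bot_iff_forall B).mpr hcon)
          obtain ⟨b2, hb2B, hb21⟩ := hex
          obtain ⟨b₀, hb₀A, hb₀⟩ := Subgroup.mem_map.mp (hBA' hb2B)
          haveI := hBn.comap (QuotientGroup.mk' (hypercenter G))
          have hCn : (A ⊓ Subgroup.comap (QuotientGroup.mk' (hypercenter G)) B).Normal :=
            inferInstance
          have hC0 : A ⊓ Subgroup.comap (QuotientGroup.mk' (hypercenter G)) B ≠ ⊥ := by
            intro hcon
            have hb₀C : b₀ ∈ A ⊓ Subgroup.comap (QuotientGroup.mk' (hypercenter G)) B := by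
              refine ⟨hb₀A, ?_⟩
              show QuotientGroup.mk' (hypercenter G) b₀ ∈ B
              rw [hb₀]
              exact hb2B
            rw [hcon, Subgroup.mem_bot] at hb₀C
            apply hb21
            rw [← hb₀, hb₀C, map_one]
          rcases hminA _ hCn inf_le_left with h | h
          · exact absurd h hC0
          · refine le_antisymm hBA' ?_
            intro a2 ha2
            obtain ⟨a, haA, rfl⟩ := Subgroup.mem_map.mp ha2
            have haC : a ∈ A ⊓ Subgroup.comap (QuotientGroup.mk' (hypercenter G)) B := by
              rw [h]; exact haA
            exact haC.2
        have hxA' : ∀ a ∈ A', (QuotientGroup.mk' (hypercenter G)) x₀ * a =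
            a * (QuotientGroup.mk' (hypercenter G)) x₀ := by
          intro a2 ha2
          obtain ⟨a, haA, rfl⟩ := Subgroup.mem_map.mp ha2
          rw [← map_mul, ← map_mul]
          congr 1
          exact Subgroup.mem_centralizer_iff.mp (hAZ haA) x₀ hx₀H
        have hx' : ∀ g2 : G ⧸ hypercenter G,
            ((QuotientGroup.mk' (hypercenter G)) x₀)⁻¹ *
              (g2 * (QuotientGroup.mk' (hypercenter G)) x₀ * g2⁻¹) ∈ A' := by
          intro g2
          obtain ⟨g, rfl⟩ := QuotientGroup.mk'_surjective (hypercenter G) g2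
          have h1 := hu g
          have h2 : x₀⁻¹ * (g * x₀ * g⁻¹) ∈
              ((hypercenter G : Set G) * (A : Set G) : Set G) := by
            rw [← Subgroup.mul_normal]
            exact h1
          obtain ⟨z, hz, a, ha, hza⟩ := h2
          have h3 : (QuotientGroup.mk' (hypercenter G)) (x₀⁻¹ * (g * x₀ * g⁻¹)) ∈ A' := by
            rw [← hza, map_mul]
            rw [show (QuotientGroup.mk' (hypercenter G)) z = 1 from
              (QuotientGroup.eq_one_iff z).mpr hz, one_mul]
            exact Subgroup.mem_map_of_mem _ ha
          simpa [map_mul, map_inv] using h3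
        have hLN' : ∀ (G'' : Type u) [Group G''] (f : (G ⧸ hypercenter G) →* G''),
            Function.Surjective f →
            Subgroup.centralizer {(QuotientGroup.mk' (hypercenter G)) x₀} ⊓
              Subgroup.centralizer (A' : Set (G ⧸ hypercenter G)) ≤ f.ker →
            LocallyNilpotent G'' := by
          intro G'' _ f hf hker
          have hkill : ∀ c ∈ Subgroup.centralizer (H : Set G),
              (f.comp (QuotientGroup.mk' (hypercenter G))) c = 1 := by
            intro c hc
            have h1 : (QuotientGroup.mk' (hypercenter G)) c ∈
                Subgroup.centralizer {(QuotientGroup.mk' (hypercenter G)) x₀} ⊓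
                  Subgroup.centralizer (A' : Set (G ⧸ hypercenter G)) := by
              refine Subgroup.mem_inf.mpr ⟨?_, ?_⟩
              · rw [Subgroup.mem_centralizer_iff]
                rintro h2 hh2
                rw [Set.mem_singleton_iff] at hh2
                subst hh2
                rw [← map_mul, ← map_mul]
                congr 1
                exact Subgroup.mem_centralizer_iff.mp hc x₀ hx₀H
              · rw [Subgroup.mem_centralizer_iff]
                rintro a2 ha2
                obtain ⟨a, haA, rfl⟩ := Subgroup.mem_map.mp ha2
                rw [← map_mul, ← map_mul]
                congr 1
                exact Subgroup.mem_centralizer_iff.mp hc a (hAH haA)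
            exact hker h1
          have hψ2s : Function.Surjective
              (QuotientGroup.lift _ (f.comp (QuotientGroup.mk' (hypercenter G))) hkill :
                (G ⧸ Subgroup.centralizer (H : Set G)) →* G'') := by
            intro w
            obtain ⟨w2, rfl⟩ := hf w
            obtain ⟨g, rfl⟩ := QuotientGroup.mk'_surjective (hypercenter G) w2
            exact ⟨QuotientGroup.mk g, rfl⟩
          exact LocallyNilpotent.of_surjective' _ hψ2s hln
        have hcore := core_lemma A' habel' hmin' (center_quot_hypercenter (G := G))
          ((QuotientGroup.mk' (hypercenter G)) x₀) hxA' hx' hLN'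
        obtain ⟨a, haA, ha⟩ := Subgroup.mem_map.mp hcore
        have hz : x₀ * a⁻¹ ∈ hypercenter G := by
          have h1 : (QuotientGroup.mk' (hypercenter G)) (x₀ * a⁻¹) = 1 := by
            rw [map_mul, map_inv, ← ha]
            simp
          exact (QuotientGroup.eq_one_iff _).mp h1
        have h2 : x₀ = (x₀ * a⁻¹) * a := by group
        rw [h2]
        exact mul_mem ((le_sup_left : hypercenter G ≤ hypercenter G ⊔ A) hz)
          ((le_sup_right : A ≤ hypercenter G ⊔ A) haA)
      have hord : ∀ o : Ordinal.{u}, ∀ x₀ ∈ H,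
          (QuotientGroup.mk' A) x₀ ∈ ucsOrd (G ⧸ A) o → x₀ ∈ hypercenter G ⊔ A := by
        intro o
        induction o using Ordinal.induction with
        | h j IH2 =>
          rcases Ordinal.zero_or_succ_or_isSuccLimit j with rfl | ⟨sj, rfl⟩ | hlim
          · intro x₀ _ hmem
            rw [ucsOrd_zero, Subgroup.mem_bot] at hmem
            have hxA : x₀ ∈ A := by
              rwa [← QuotientGroup.ker_mk' A, MonoidHom.mem_ker]
            exact (le_sup_right : A ≤ hypercenter G ⊔ A) hxA
          · intro x₀ hx₀ hmem
            rw [mem_ucsOrd_succ] at hmem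
            apply hkey x₀ hx₀
            intro g
            have h1 := hmem (QuotientGroup.mk g)
            have h2 : (QuotientGroup.mk' A) (x₀ * g * x₀⁻¹ * g⁻¹) ∈ ucsOrd (G ⧸ A) sj := by
              simpa [map_mul, map_inv] using h1
            have h3 : x₀ * g * x₀⁻¹ * g⁻¹ ∈ H := by
              have h4 : x₀ * (g * x₀⁻¹ * g⁻¹) ∈ H :=
                mul_mem hx₀ (‹H.Normal›.conj_mem _ (inv_mem hx₀) g)
              simpa [mul_assoc] using h4
            exact IH2 sj (Order.lt_succ sj) _ h3 h2
          · intro x₀ hx₀ hmem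
            rw [ucsOrd_limit hlim] at hmem
            haveI : Nonempty { b : Ordinal.{u} // b < j } := ⟨⟨0, hlim.pos⟩⟩
            have hdir : Directed (· ≤ ·)
                (fun b : { b : Ordinal.{u} // b < j } => ucsOrd (G ⧸ A) b.1) := by
              intro b₁ b₂
              rcases le_total b₁.1 b₂.1 with h | h
              · exact ⟨b₂, ucsOrd_mono_aux _ _ h, le_rfl⟩
              · exact ⟨b₁, le_rfl, ucsOrd_mono_aux _ _ h⟩
            obtain ⟨b, hb⟩ := (Subgroup.mem_iSup_of_directed hdir).mp hmem
            exact IH2 b.1 b.2 _ hx₀ hb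
      intro h hh
      have h1 : (QuotientGroup.mk' A) h ∈ hypercenter (G ⧸ A) :=
        hhyp (Subgroup.mem_map_of_mem _ hh)
      obtain ⟨o, ho⟩ := mem_hypercenter.mp h1
      exact hord o h hh ho
    · -- A is not minimal: reduce via a smaller normal subgroup B
      push_neg at hminA
      obtain ⟨B, hBn, hBA, hB0, hBneA⟩ := hminA
      haveI := hBn
      haveI : Finite ↥B :=
        Finite.of_injective (Subgroup.inclusion hBA) (Subgroup.inclusion_injective hBA)
      set AB : Subgroup (G ⧸ B) := A.map (QuotientGroup.mk' B) with hABdef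
      set HB : Subgroup (G ⧸ B) := H.map (QuotientGroup.mk' B) with hHBdef
      haveI : AB.Normal := Subgroup.Normal.map ‹_› _ (QuotientGroup.mk'_surjective _)
      haveI : HB.Normal := Subgroup.Normal.map ‹_› _ (QuotientGroup.mk'_surjective _)
      haveI : Finite ↥AB := finite_map_of_finite _ A
      have hcardBA : Nat.card ↥B < Nat.card ↥A := by
        have hlt : B < A := lt_of_le_of_ne hBA hBneA
        have hss : (B : Set G) ⊂ (A : Set G) := by
          rw [Set.ssubset_iff_of_subset (SetLike.coe_subset_coe.mpr hBA)]
          obtain ⟨a, haA, haB⟩ := SetLike.exists_of_lt hlt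
          exact ⟨a, haA, haB⟩
        calc Nat.card ↥B = (B : Set G).ncard := Nat.card_coe_set_eq _
          _ < (A : Set G).ncard := Set.ncard_lt_ncard hss (Set.toFinite _)
          _ = Nat.card ↥A := (Nat.card_coe_set_eq _).symm
      have hcardB : Nat.card ↥B < n := by omega
      have hcardABA : Nat.card ↥AB < Nat.card ↥A := by
        set φ : ↥A →* G ⧸ B := (QuotientGroup.mk' B).comp A.subtype with hφdef
        have hrange : φ.range = AB := by
          ext z
          constructor
          · rintro ⟨a, rfl⟩
            exact Subgroup.mem_map_of_mem _ a.2
          · intro hz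
            obtain ⟨a, ha, rfl⟩ := Subgroup.mem_map.mp hz
            exact ⟨⟨a, ha⟩, rfl⟩
        have hker2 : Nontrivial ↥φ.ker := by
          obtain ⟨b₀, hb₀B, hb₀1⟩ : ∃ b ∈ B, b ≠ 1 := by
            by_contra hcon
            push_neg at hcon
            exact hB0 ((Subgroup.eq_bot_iff_forall B).mpr hcon)
          refine ⟨⟨⟨b₀, hBA hb₀B⟩, ?_⟩, 1, ?_⟩
          · show φ ⟨b₀, hBA hb₀B⟩ = 1
            rw [hφdef]
            exact (QuotientGroup.eq_one_iff b₀).mpr hb₀B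
          · intro hcon
            apply hb₀1
            have := congrArg (fun w : ↥φ.ker => ((w : ↥A) : G)) hcon
            simpa using this
        have hmul : Nat.card ↥φ.ker * (φ.ker).index = Nat.card ↥A :=
          Subgroup.card_mul_index _
        have hquot : (φ.ker).index = Nat.card ↥AB := by
          rw [Subgroup.index_eq_card, ← hrange]
          exact Nat.card_congr (QuotientGroup.quotientKerEquivRange φ).toEquiv
        have h2 : 2 ≤ Nat.card ↥φ.ker := Finite.one_lt_card_iff_nontrivial.mpr hker2
        have hABpos : 0 < Nat.card ↥AB := Nat.card_pos
        calc Nat.card ↥AB < 2 * Nat.card ↥AB := by omega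
          _ ≤ Nat.card ↥φ.ker * Nat.card ↥AB := Nat.mul_le_mul_right _ h2
          _ = Nat.card ↥A := by rw [← hquot, hmul]
      have hcardAB : Nat.card ↥AB < n := by omega
      have h1 : AB ≤ HB := Subgroup.map_mono hAH
      have h2 : AB ≤ Subgroup.centralizer (HB : Set (G ⧸ B)) := by
        intro a2 ha2
        obtain ⟨a, haA, rfl⟩ := Subgroup.mem_map.mp ha2
        rw [Subgroup.mem_centralizer_iff]
        rintro h2 hh2
        obtain ⟨h, hhH, rfl⟩ := Subgroup.mem_map.mp hh2
        rw [← map_mul, ← map_mul]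
        congr 1
        exact Subgroup.mem_centralizer_iff.mp (hAZ haA) h hhH
      have h3 : LocallyNilpotent ((G ⧸ B) ⧸ Subgroup.centralizer (HB : Set (G ⧸ B))) := by
        have hkill : ∀ c ∈ Subgroup.centralizer (H : Set G),
            ((QuotientGroup.mk' (Subgroup.centralizer (HB : Set (G ⧸ B)))).comp
              (QuotientGroup.mk' B)) c = 1 := by
          intro c hc
          rw [MonoidHom.comp_apply, QuotientGroup.mk'_apply, QuotientGroup.eq_one_iff]
          rw [Subgroup.mem_centralizer_iff]
          rintro h2 hh2
          obtain ⟨h, hhH, rfl⟩ := Subgroup.mem_map.mp hh2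
          rw [← map_mul, ← map_mul]
          congr 1
          exact Subgroup.mem_centralizer_iff.mp hc h hhH
        have hsurj : Function.Surjective
            (QuotientGroup.lift _ _ hkill :
              (G ⧸ Subgroup.centralizer (H : Set G)) →*
                ((G ⧸ B) ⧸ Subgroup.centralizer (HB : Set (G ⧸ B)))) := by
          intro w
          obtain ⟨w2, rfl⟩ := QuotientGroup.mk'_surjective _ w
          obtain ⟨g, rfl⟩ := QuotientGroup.mk'_surjective B w2
          exact ⟨QuotientGroup.mk g, rfl⟩
        exact LocallyNilpotent.of_surjective' _ hsurj hln
      have h4 : HB.map (QuotientGroup.mk' AB) ≤ hypercenter ((G ⧸ B) ⧸ AB) := by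
        rintro z hz
        obtain ⟨h2, hh2, rfl⟩ := Subgroup.mem_map.mp hz
        obtain ⟨h, hhH, rfl⟩ := Subgroup.mem_map.mp hh2
        apply mem_hypercenter_of_equiv_mem (QuotientGroup.quotientQuotientEquivQuotient B A hBA)
        have he : (QuotientGroup.quotientQuotientEquivQuotient B A hBA)
            ((QuotientGroup.mk' AB) ((QuotientGroup.mk' B) h)) = (QuotientGroup.mk' A) h :=
          QuotientGroup.quotientQuotientEquivQuotientAux_mk_mk B A hBA h
        rw [he]
        exact hhyp (Subgroup.mem_map_of_mem _ hhH)
      have hIH1 := IH (G ⧸ B) AB HB hcardAB h1 h2 h3 h4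
      set V : Subgroup G := Subgroup.comap (QuotientGroup.mk' B) (hypercenter (G ⧸ B))
        with hVdef
      haveI : V.Normal := Subgroup.Normal.comap inferInstance _
      haveI : (V ⊓ H).Normal := inferInstance
      have k1 : B ≤ V ⊓ H := by
        refine le_inf ?_ (hBA.trans hAH)
        intro b hb
        show QuotientGroup.mk' B b ∈ hypercenter (G ⧸ B)
        have hb1 : QuotientGroup.mk' B b = 1 := (QuotientGroup.eq_one_iff b).mpr hb
        rw [hb1]
        exact one_mem _
      have k2 : B ≤ Subgroup.centralizer ((V ⊓ H : Subgroup G) : Set G) :=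
        hBA.trans (hAZ.trans (Subgroup.centralizer_le
          (SetLike.coe_subset_coe.mpr inf_le_right)))
      have k3 : LocallyNilpotent (G ⧸ Subgroup.centralizer ((V ⊓ H : Subgroup G) : Set G)) := by
        have hle : Subgroup.centralizer (H : Set G) ≤
            Subgroup.centralizer ((V ⊓ H : Subgroup G) : Set G) :=
          Subgroup.centralizer_le (SetLike.coe_subset_coe.mpr inf_le_right)
        have hkill : ∀ c ∈ Subgroup.centralizer (H : Set G),
            (QuotientGroup.mk' (Subgroup.centralizer ((V ⊓ H : Subgroup G) : Set G))) c = 1 :=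
          fun c hc => (QuotientGroup.eq_one_iff c).mpr (hle hc)
        have hsurj : Function.Surjective (QuotientGroup.lift _ _ hkill :
            (G ⧸ Subgroup.centralizer (H : Set G)) →*
              (G ⧸ Subgroup.centralizer ((V ⊓ H : Subgroup G) : Set G))) := by
          intro w
          obtain ⟨g, rfl⟩ := QuotientGroup.mk'_surjective _ w
          exact ⟨QuotientGroup.mk g, rfl⟩
        exact LocallyNilpotent.of_surjective' _ hsurj hln
      have k4 : (V ⊓ H : Subgroup G).map (QuotientGroup.mk' B) ≤ hypercenter (G ⧸ B) := by
        rintro z hz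
        obtain ⟨w, hw, rfl⟩ := Subgroup.mem_map.mp hz
        exact hw.1
      have hIH2 := IH G B (V ⊓ H) hcardB k1 k2 k3 k4
      intro h hh
      have h5 : (QuotientGroup.mk' B) h ∈ hypercenter (G ⧸ B) ⊔ AB :=
        hIH1 _ (Subgroup.mem_map_of_mem _ hh)
      have h6 : (QuotientGroup.mk' B) h ∈
          ((hypercenter (G ⧸ B) : Set (G ⧸ B)) * (AB : Set (G ⧸ B)) : Set (G ⧸ B)) := by
        rw [← Subgroup.mul_normal]
        exact h5
      obtain ⟨ζ, hζ, a2, ha2, hza⟩ := h6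
      obtain ⟨a, haA, rfl⟩ := Subgroup.mem_map.mp ha2
      have h7 : h * a⁻¹ ∈ V ⊓ H := by
        refine Subgroup.mem_inf.mpr ⟨?_, mul_mem hh (inv_mem (hAH haA))⟩
        show (QuotientGroup.mk' B) (h * a⁻¹) ∈ hypercenter (G ⧸ B)
        have h8 : (QuotientGroup.mk' B) (h * a⁻¹) = ζ := by
          rw [map_mul, map_inv, ← hza]
          simp
        rw [h8]
        exact hζ
      have h9 : h * a⁻¹ ∈ hypercenter G ⊔ B := hIH2 _ h7
      have h10 : h * a⁻¹ ∈ hypercenter G ⊔ A := (sup_le_sup_left hBA _) h9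
      have h11 : h = (h * a⁻¹) * a := by group
      rw [h11]
      exact mul_mem h10 ((le_sup_right : A ≤ hypercenter G ⊔ A) haA)

end MainProof


open Pointwise in
/-- **Key Lemma.** Let `A ≤ H` be normal subgroups of a group `G` with `A` finite and
`A ≤ Z(H)`. If `G/C_G(H)` is locally nilpotent and the image of `H` in `G/A` is contained
in the hypercenter `Z_∞(G/A)`, then `H ≤ Z_∞(G)·A`. -/
theorem le_hypercenter_mul_of_central
    (G : Type u) [Group G] (A H : Subgroup G) [A.Normal] [H.Normal] [Finite A]
    (hAH : A ≤ H) (hAZ : A ≤ Subgroup.centralizer (H : Set G))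
    (hln : LocallyNilpotent (G ⧸ Subgroup.centralizer (H : Set G)))
    (hhyp : H.map (QuotientGroup.mk' A) ≤ hypercenter (G ⧸ A)) :
    (H : Set G) ⊆ (hypercenter G : Set G) * (A : Set G) := by
  intro g hg
  have h := main_aux (Nat.card ↥A + 1) G A H (Nat.lt_succ_self _) hAH hAZ hln hhyp g hg
  rw [← Subgroup.mul_normal]
  exact h
end

section
/- Let p be an odd prime, let G = ⨁_{i<ω} ⟨a_i⟩ be an elementary abelian p-group with basis (a_i)_{i<ω}, and let Z = ⨁_{0<i<ω} ⟨a_i⟩. For each i > 0 let γ_i ∈ Aut(G) be the automorphism fixing Z pointwise with a_0^{γ_i} = a_0 a_i, and let τ ∈ Aut(G) fix Z pointwise with a_0^τ = a_0^2. Let A = ⟨τ, γ_i (i > 0)⟩ ≤ Aut(G). Then Z = Z_1(G,A) = Z_∞(G,A) has index p in G, while for every proper A-invariant subgroup K of G (in particular for every finite A-invariant subgroup L of G), the quotient G/K is not A-hypercentral. -/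
/-!  Transfinite upper central series, hypercenter, and `A`-central series
for a group `G` with `A ≤ Aut G` normalized by the inner automorphisms. -/

universe u v

open Subgroup

section ExampleAux

open Multiplicative Finsupp

/-- Unfolding: `Z_0 = L`. -/
theorem aCentralSeriesFrom_zero {G : Type u} [Group G] (A : Subgroup (MulAut G))
    (hA : NormalizedByInn A) (L : Subgroup G) (hL : L.Normal) :
    aCentralSeriesFrom A hA L hL 0 = L := by
  unfold aCentralSeriesFrom aCentralSeriesFromAux
  rw [Ordinal.limitRecOn_zero]

/-- Unfolding: `Z_{α+1} = aStep A Z_α`. -/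
theorem aCentralSeriesFrom_succ {G : Type u} [Group G] (A : Subgroup (MulAut G))
    (hA : NormalizedByInn A) (L : Subgroup G) (hL : L.Normal) (o : Ordinal.{u}) :
    aCentralSeriesFrom A hA L hL (Order.succ o) =
      aStep A (aCentralSeriesFrom A hA L hL o) (aCentralSeriesFromAux A hA L hL o).2 := by
  unfold aCentralSeriesFrom aCentralSeriesFromAux
  rw [Ordinal.limitRecOn_succ]

/-- Unfolding at limit ordinals. -/
theorem aCentralSeriesFrom_limit {G : Type u} [Group G] (A : Subgroup (MulAut G))
    (hA : NormalizedByInn A) (L : Subgroup G) (hL : L.Normal) (o : Ordinal.{u})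
    (h : Order.IsSuccLimit o) :
    aCentralSeriesFrom A hA L hL o =
      ⨆ b : { b : Ordinal.{u} // b < o }, aCentralSeriesFrom A hA L hL b.1 := by
  unfold aCentralSeriesFrom aCentralSeriesFromAux
  rw [Ordinal.limitRecOn_limit _ _ _ _ h]

/-- If `L ≤ Z'` and `aStep` preserves being below `Z'`, every term of the series from `L`
is below `Z'`. -/
theorem aCentralSeriesFrom_le {G : Type u} [Group G] (A : Subgroup (MulAut G))
    (hA : NormalizedByInn A) (L : Subgroup G) (hL : L.Normal) (Z' : Subgroup G)
    (hLZ : L ≤ Z')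
    (hstep : ∀ (K : Subgroup G) (hK : K.Normal), K ≤ Z' → aStep A K hK ≤ Z')
    (o : Ordinal.{u}) : aCentralSeriesFrom A hA L hL o ≤ Z' := by
  induction o using Ordinal.limitRecOn with
  | zero => rw [aCentralSeriesFrom_zero]; exact hLZ
  | add_one o ih => rw [Ordinal.add_one_eq_succ, aCentralSeriesFrom_succ]; exact hstep _ _ ih
  | limit o h ih =>
      rw [aCentralSeriesFrom_limit A hA L hL o h]
      exact iSup_le fun b => ih b.1 b.2

/-- The subgroup of automorphisms fixing `Z` pointwise. -/
def fixingSubgroup' {G : Type u} [Group G] (Z : Subgroup G) : Subgroup (MulAut G) where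
  carrier := { φ : MulAut G | ∀ z ∈ Z, φ z = z }
  one_mem' := fun _ _ => rfl
  mul_mem' := by
    intro φ ψ hφ hψ z hz
    show φ (ψ z) = z
    rw [hψ z hz, hφ z hz]
  inv_mem' := by
    intro φ hφ z hz
    show φ⁻¹ z = z
    conv_lhs => rw [← hφ z hz]
    exact φ.symm_apply_apply z

/-- `a i = ofAdd (single i 1)` in `Multiplicative (ℕ →₀ ZMod p)`. -/
noncomputable def exA (p i : ℕ) : Multiplicative (ℕ →₀ ZMod p) :=
  Multiplicative.ofAdd (Finsupp.single i 1)

theorem toAdd_exA_pow (p i n : ℕ) :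
    Multiplicative.toAdd (exA p i ^ n) = Finsupp.single i (n : ZMod p) := by
  have h : Multiplicative.toAdd (exA p i ^ n) = n • Finsupp.single i (1 : ZMod p) := rfl
  rw [h, Finsupp.smul_single, nsmul_eq_mul, mul_one]

theorem exA_pow_eq (p i n : ℕ) :
    exA p i ^ n = Multiplicative.ofAdd (Finsupp.single i (n : ZMod p)) :=
  Multiplicative.toAdd.injective (by rw [toAdd_exA_pow]; rfl)

theorem exA_of_pow_mem {p : ℕ} [NeZero p] [Fact p.Prime]
    (K : Subgroup (Multiplicative (ℕ →₀ ZMod p))) (i n : ℕ)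
    (hn : (n : ZMod p) ≠ 0) (h : exA p i ^ n ∈ K) : exA p i ∈ K := by
  have h2 : exA p i ^ (n * ((n : ZMod p))⁻¹.val) ∈ K := by
    rw [pow_mul]; exact pow_mem h _
  have h3 : exA p i ^ (n * ((n : ZMod p))⁻¹.val) = exA p i := by
    rw [exA_pow_eq]
    have : ((n * ((n : ZMod p))⁻¹.val : ℕ) : ZMod p) = 1 := by
      push_cast
      rw [ZMod.natCast_val, ZMod.cast_id, mul_inv_cancel₀ hn]
    rw [this]; rfl
  rwa [h3] at h2

theorem exA_gen {p : ℕ} [NeZero p] (K : Subgroup (Multiplicative (ℕ →₀ ZMod p)))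
    (h : ∀ i, exA p i ∈ K) : K = ⊤ := by
  rw [eq_top_iff]
  intro g _
  have hg : g = Multiplicative.ofAdd (Multiplicative.toAdd g) := rfl
  rw [hg]
  generalize Multiplicative.toAdd g = x
  induction x using Finsupp.induction with
  | zero => exact K.one_mem
  | single_add j b f _ _ ih =>
      have h1 : Multiplicative.ofAdd (Finsupp.single j b + f) =
          exA p j ^ b.val * Multiplicative.ofAdd f := by
        rw [exA_pow_eq, ZMod.natCast_val, ZMod.cast_id]; rfl
      rw [h1]
      exact mul_mem (pow_mem (h j) _) ih

/-- The decomposition lemma: an automorphism fixing `Z` pointwise is determined by its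
value on `a 0`. -/
theorem exKey {p : ℕ} [NeZero p] (Z : Subgroup (Multiplicative (ℕ →₀ ZMod p)))
    (hZ : ∀ g, g ∈ Z ↔ Multiplicative.toAdd g 0 = 0)
    (φ : MulAut (Multiplicative (ℕ →₀ ZMod p)))
    (h1 : ∀ z ∈ Z, φ z = z) (w : Multiplicative (ℕ →₀ ZMod p))
    (h2 : φ (exA p 0) = exA p 0 * w) (g : Multiplicative (ℕ →₀ ZMod p)) :
    φ g = g * w ^ (Multiplicative.toAdd g 0).val := by
  set n := (Multiplicative.toAdd g 0).val with hn
  set z := (exA p 0 ^ n)⁻¹ * g with hzdef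
  have hzZ : z ∈ Z := by
    rw [hZ]
    have hz : Multiplicative.toAdd z =
        -(Finsupp.single 0 ((n : ZMod p))) + Multiplicative.toAdd g := by
      rw [hzdef]
      have : Multiplicative.toAdd ((exA p 0 ^ n)⁻¹ * g) =
          -(Multiplicative.toAdd (exA p 0 ^ n)) + Multiplicative.toAdd g := rfl
      rw [this, toAdd_exA_pow]
    rw [hz]
    simp only [Finsupp.add_apply, Finsupp.neg_apply, Finsupp.single_eq_same]
    rw [hn, ZMod.natCast_val, ZMod.cast_id]
    exact neg_add_cancel _
  have hg : g = exA p 0 ^ n * z := by rw [hzdef, mul_inv_cancel_left]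
  calc φ g = φ (exA p 0) ^ n * z := by
        rw [hg, map_mul, map_pow, h1 z hzZ]
    _ = exA p 0 ^ n * w ^ n * z := by rw [h2, mul_pow]
    _ = exA p 0 ^ n * z * w ^ n := by rw [mul_right_comm]
    _ = g * w ^ n := by rw [← hg]

end ExampleAux


/-- **Example (Section 3).** Let `p` be an odd prime, `G = ⨁_{i<ω} ⟨a_i⟩` an elementary
abelian `p`-group (written multiplicatively as `Multiplicative (ℕ →₀ ZMod p)` with
`a i = ofAdd (single i 1)`), and `Z = ⨁_{0<i<ω} ⟨a_i⟩`.  For `i > 0` let `γ_i ∈ Aut(G)` fix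
`Z` pointwise with `a_0 ↦ a_0 a_i`, let `τ ∈ Aut(G)` fix `Z` pointwise with `a_0 ↦ a_0²`,
and let `A = ⟨τ, γ_i (i > 0)⟩`.  Then `Z = Z_1(G,A) = Z_∞(G,A)` has index `p` in `G`, while
for every proper `A`-invariant subgroup `K` of `G` — in particular for every finite
`A`-invariant subgroup `L` — the quotient `G/K` is not `A`-hypercentral. -/
theorem example_proper_invariant_quotient_not_hypercentral
    (p : ℕ) (hp : p.Prime) (hodd : Odd p) :
    ∀ (a : ℕ → Multiplicative (ℕ →₀ ZMod p)),
      (∀ i, a i = Multiplicative.ofAdd (Finsupp.single i 1)) →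
      ∀ Z : Subgroup (Multiplicative (ℕ →₀ ZMod p)),
        (∀ g, g ∈ Z ↔ Multiplicative.toAdd g 0 = 0) →
      ∀ γi : ℕ → MulAut (Multiplicative (ℕ →₀ ZMod p)),
        (∀ i, 0 < i → (∀ z ∈ Z, γi i z = z) ∧ γi i (a 0) = a 0 * a i) →
      ∀ τ : MulAut (Multiplicative (ℕ →₀ ZMod p)),
        (∀ z ∈ Z, τ z = z) → τ (a 0) = a 0 ^ 2 →
      ∀ A : Subgroup (MulAut (Multiplicative (ℕ →₀ ZMod p))),
        A = Subgroup.closure (insert τ { γ | ∃ i, 0 < i ∧ γ = γi i }) →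
        (aCentralSeries A (normalizedByInn_of_comm A) 1 = Z ∧
          aHypercenter A (normalizedByInn_of_comm A) = Z ∧ Z.index = p) ∧
        (∀ K : Subgroup (Multiplicative (ℕ →₀ ZMod p)), K ≠ ⊤ →
          (∀ γ ∈ A, ∀ x ∈ K, γ x ∈ K) →
          aHypercenterFrom A (normalizedByInn_of_comm A) K inferInstance ≠ ⊤) ∧
        (∀ L : Subgroup (Multiplicative (ℕ →₀ ZMod p)), Finite L →
          (∀ γ ∈ A, ∀ x ∈ L, γ x ∈ L) →
          aHypercenterFrom A (normalizedByInn_of_comm A) L inferInstance ≠ ⊤) := by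
  haveI : Fact p.Prime := ⟨hp⟩
  haveI : NeZero p := ⟨hp.pos.ne'⟩
  intro a ha Z hZ γi hγ τ hτZ hτa A hA
  have ha' : ∀ i, a i = exA p i := fun i => ha i
  have hτA : τ ∈ A := by
    rw [hA]; exact Subgroup.subset_closure (Set.mem_insert _ _)
  have hγA : ∀ i, 0 < i → γi i ∈ A := fun i hi => by
    rw [hA]; exact Subgroup.subset_closure (Set.mem_insert_iff.2 (Or.inr ⟨i, hi, rfl⟩))
  have hfix : ∀ φ ∈ A, ∀ z ∈ Z, φ z = z := by
    have hle : A ≤ fixingSubgroup' Z := by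
      rw [hA]
      refine (Subgroup.closure_le _).2 ?_
      intro φ hφ
      simp only [Set.mem_insert_iff, Set.mem_setOf_eq] at hφ
      rcases hφ with rfl | ⟨i, hi, rfl⟩
      · exact hτZ
      · exact (hγ i hi).1
    exact fun φ hφ => hle hφ
  have hτform : ∀ g, τ g = g * exA p 0 ^ (Multiplicative.toAdd g 0).val :=
    exKey Z hZ τ hτZ (exA p 0) (by rw [← ha' 0, hτa, pow_two])
  have hγform : ∀ i, 0 < i → ∀ g,
      γi i g = g * exA p i ^ (Multiplicative.toAdd g 0).val := fun i hi =>
    exKey Z hZ (γi i) (hγ i hi).1 (exA p i)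
      (by rw [← ha' i, ← ha' 0]; exact (hγ i hi).2)
  have hpowZ : ∀ n : ℕ, exA p 0 ^ n ∈ Z ↔ ((n : ZMod p) = 0) := by
    intro n
    rw [hZ, toAdd_exA_pow, Finsupp.single_eq_same]
  have hZtop : Z ≠ ⊤ := by
    intro h
    have h0 : exA p 0 ∈ Z := h ▸ Subgroup.mem_top _
    rw [hZ] at h0
    have h1 : (Finsupp.single 0 (1 : ZMod p)) 0 = 0 := h0
    rw [Finsupp.single_eq_same] at h1
    exact one_ne_zero h1
  have hZle : ∀ (K : Subgroup (Multiplicative (ℕ →₀ ZMod p))) (hK : K.Normal),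
      Z ≤ aStep A K hK := by
    intro K hK g hg φ hφ
    rw [hfix φ hφ g hg, inv_mul_cancel]
    exact K.one_mem
  have hstep_le : ∀ (K : Subgroup (Multiplicative (ℕ →₀ ZMod p))) (hK : K.Normal),
      K ≤ Z → aStep A K hK ≤ Z := by
    intro K hK hKZ g hg
    have h1 : g⁻¹ * τ g ∈ K := hg τ hτA
    rw [hτform g, inv_mul_cancel_left] at h1
    have h2 := (hpowZ _).1 (hKZ h1)
    rw [ZMod.natCast_val, ZMod.cast_id] at h2
    exact (hZ g).2 h2
  have hseries_le : ∀ (L : Subgroup (Multiplicative (ℕ →₀ ZMod p))) (hL : L.Normal),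
      L ≤ Z → ∀ o, aCentralSeriesFrom A (normalizedByInn_of_comm A) L hL o ≤ Z :=
    fun L hL hLZ o => aCentralSeriesFrom_le A _ L hL Z hLZ hstep_le o
  have hZ1 : aCentralSeries A (normalizedByInn_of_comm A) 1 = Z := by
    show aCentralSeriesFrom A (normalizedByInn_of_comm A) ⊥ _ 1 = Z
    rw [show (1 : Ordinal) = Order.succ 0 from Ordinal.succ_zero.symm,
        aCentralSeriesFrom_succ]
    refine le_antisymm (hstep_le _ _ ?_) (hZle _ _)
    rw [aCentralSeriesFrom_zero]
    exact bot_le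
  have hhyp : aHypercenter A (normalizedByInn_of_comm A) = Z := by
    refine le_antisymm (iSup_le fun o => hseries_le ⊥ inferInstance bot_le o) ?_
    rw [← hZ1]
    exact le_iSup (fun o => aCentralSeries A (normalizedByInn_of_comm A) o) 1
  have hindex : Z.index = p := by
    set f : Multiplicative (ℕ →₀ ZMod p) →* Multiplicative (ZMod p) :=
      AddMonoidHom.toMultiplicative (Finsupp.applyAddHom (0 : ℕ)) with hf
    have hker : Z = f.ker := by
      ext g
      rw [hZ, MonoidHom.mem_ker,
        show f g = Multiplicative.ofAdd (Multiplicative.toAdd g 0) from rfl,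
        ofAdd_eq_one]
    have hsurj : Function.Surjective f := by
      intro y
      refine ⟨Multiplicative.ofAdd (Finsupp.single 0 (Multiplicative.toAdd y)), ?_⟩
      show Multiplicative.ofAdd ((Finsupp.single 0 (Multiplicative.toAdd y)) 0) = y
      rw [Finsupp.single_eq_same]
      rfl
    rw [hker, Subgroup.index_ker, MonoidHom.range_eq_top.2 hsurj, Subgroup.card_top,
      Nat.card_congr (Multiplicative.toAdd (α := ZMod p)), Nat.card_zmod]
  have hKpart : ∀ K : Subgroup (Multiplicative (ℕ →₀ ZMod p)), K ≠ ⊤ →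
      (∀ γ ∈ A, ∀ x ∈ K, γ x ∈ K) →
      aHypercenterFrom A (normalizedByInn_of_comm A) K inferInstance ≠ ⊤ := by
    intro K hKtop hKinv
    have hKZ : K ≤ Z := by
      by_contra hc
      obtain ⟨g, hgK, hgZ⟩ := SetLike.not_le_iff_exists.1 hc
      have hcv : (((Multiplicative.toAdd g 0).val : ℕ) : ZMod p) ≠ 0 := by
        rw [ZMod.natCast_val, ZMod.cast_id]
        exact fun h => hgZ ((hZ g).2 h)
      have hmem : ∀ i, exA p i ∈ K := by
        intro i
        rcases Nat.eq_zero_or_pos i with rfl | hi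
        · have h1 : g⁻¹ * τ g ∈ K := mul_mem (inv_mem hgK) (hKinv τ hτA g hgK)
          rw [hτform g, inv_mul_cancel_left] at h1
          exact exA_of_pow_mem K 0 _ hcv h1
        · have h1 : g⁻¹ * γi i g ∈ K :=
            mul_mem (inv_mem hgK) (hKinv (γi i) (hγA i hi) g hgK)
          rw [hγform i hi g, inv_mul_cancel_left] at h1
          exact exA_of_pow_mem K i _ hcv h1
      exact hKtop (exA_gen K hmem)
    intro htop
    have hle : aHypercenterFrom A (normalizedByInn_of_comm A) K inferInstance ≤ Z :=
      iSup_le fun o => hseries_le K inferInstance hKZ o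
    rw [htop] at hle
    exact hZtop (le_antisymm le_top hle)
  refine ⟨⟨hZ1, hhyp, hindex⟩, hKpart, ?_⟩
  intro L hLfin hLinv
  refine hKpart L ?_ hLinv
  intro h
  rw [h] at hLfin
  haveI : Finite (Multiplicative (ℕ →₀ ZMod p)) :=
    Finite.of_equiv _ Subgroup.topEquiv.toEquiv
  haveI : Finite (ℕ →₀ ZMod p) := Finite.of_equiv _ Multiplicative.toAdd
  haveI : Infinite (ℕ →₀ ZMod p) := Finsupp.infinite_of_left
  exact not_finite (ℕ →₀ ZMod p)
end
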